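/- Suppose d = 2. Then for every orthonormal basis {a'_1, a'_2} of H, the error-disturbance trade-off ε(𝒜,𝒜') + η(𝒜',ℬ) ≥ η(𝒜,ℬ) holds, where η(𝒜,ℬ) = |⟨a_1, b_1⟩| · √(1 − |⟨a_1, b_1⟩|²). -/

import Mathlib

open scoped ComplexInnerProductSpace

noncomputable section

variable {H : Type*} [NormedAddCommGroup H] [InnerProductSpace ℂ H] [FiniteDimensional ℂ H]
variable {ι ι' : Type*} [Fintype ι] [Fintype ι']

/-- The rank-one projector `|v⟩⟨v|`. -/
def ketbra (v : H) : H →ₗ[ℂ] H where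
  toFun x := ⟪v, x⟫ • v
  map_add' x y := by simp [inner_add_right, add_smul]
  map_smul' c x := by simp [inner_smul_right, mul_smul]

/-- A density operator: self-adjoint, positive semidefinite, trace one. -/
def IsDensity (ρ : H →ₗ[ℂ] H) : Prop :=
  LinearMap.IsSymmetric ρ ∧ (∀ x : H, 0 ≤ (⟪x, ρ x⟫).re) ∧
    LinearMap.trace ℂ H ρ = 1

/-- The state-dependent error `ε_ρ(𝒜,𝒜')`. -/
def sdError (a a' : ι → H) (ρ : H →ₗ[ℂ] H) : ℝ :=
  ⨆ i : ι, ‖LinearMap.trace ℂ H (ρ ∘ₗ (ketbra (a i) - ketbra (a' i)))‖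

/-- The state-independent error `ε(𝒜,𝒜')`. -/
def siError (a a' : ι → H) : ℝ :=
  ⨆ ρ : {ρ : H →ₗ[ℂ] H // IsDensity ρ}, sdError a a' ρ.1

/-- The operator `|b_i⟩⟨b_i| − Σ_j |⟨a'_j, b_i⟩|² |a'_j⟩⟨a'_j|`. -/
def distOp (a' : ι' → H) (b : ι → H) (i : ι) : H →ₗ[ℂ] H :=
  ketbra (b i) - ∑ j : ι', (‖⟪a' j, b i⟫‖ ^ 2 : ℂ) • ketbra (a' j)

/-- The state-dependent disturbance `η_ρ(𝒜',ℬ)`. -/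
def sdDist (a' : ι' → H) (b : ι → H) (ρ : H →ₗ[ℂ] H) : ℝ :=
  ⨆ i : ι, ‖LinearMap.trace ℂ H (ρ ∘ₗ distOp a' b i)‖

/-- The state-independent disturbance `η(𝒜',ℬ)`. -/
def siDist (a' : ι' → H) (b : ι → H) : ℝ :=
  ⨆ ρ : {ρ : H →ₗ[ℂ] H // IsDensity ρ}, sdDist a' b ρ.1

/-- The state-independent overall error `Δ(𝒜,𝒜',ℬ)`. -/
def siOverall (a a' b : ι → H) : ℝ :=
  ⨆ ρ : {ρ : H →ₗ[ℂ] H // IsDensity ρ}, (sdError a a' ρ.1 + sdDist a' b ρ.1)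

set_option linter.unusedSectionVars false
set_option maxHeartbeats 1000000

lemma ketbra_apply (v x : H) : ketbra v x = ⟪v, x⟫ • v := rfl

lemma sq_eq' {x y : ℝ} (hx : 0 ≤ x) (hy : 0 ≤ y) (h : x ^ 2 = y ^ 2) : x = y :=
  le_antisymm (by nlinarith) (by nlinarith)

lemma trace_onb {κ : Type*} [Fintype κ] [DecidableEq κ] (e : OrthonormalBasis κ ℂ H)
    (T : H →ₗ[ℂ] H) :
    LinearMap.trace ℂ H T = ∑ i, ⟪e i, T (e i)⟫ := by
  rw [LinearMap.trace_eq_matrix_trace ℂ e.toBasis, Matrix.trace]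
  congr 1; ext i
  rw [Matrix.diag, LinearMap.toMatrix_apply, OrthonormalBasis.coe_toBasis_repr_apply,
    OrthonormalBasis.repr_apply_apply, OrthonormalBasis.coe_toBasis]

lemma trace_comp_ketbra (ρ : H →ₗ[ℂ] H) (v : H) :
    LinearMap.trace ℂ H (ρ ∘ₗ ketbra v) = ⟪v, ρ v⟫ := by
  rw [trace_onb (stdOrthonormalBasis ℂ H)]
  simp only [LinearMap.comp_apply, ketbra_apply, map_smul, inner_smul_right]
  exact (stdOrthonormalBasis ℂ H).sum_inner_mul_inner v (ρ v)

lemma ketbra_diag (u v : H) : ⟪v, ketbra u v⟫ = ((‖⟪u, v⟫‖ : ℂ)) ^ 2 := by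
  rw [ketbra_apply, inner_smul_right, ← inner_conj_symm v u, Complex.mul_conj']

lemma inner_map_expand (e : OrthonormalBasis (Fin 2) ℂ H) (T : H →ₗ[ℂ] H) (v w : H) :
    ⟪v, T w⟫ = (starRingEnd ℂ) ⟪e 0, v⟫ * ⟪e 0, w⟫ * ⟪e 0, T (e 0)⟫
      + (starRingEnd ℂ) ⟪e 0, v⟫ * ⟪e 1, w⟫ * ⟪e 0, T (e 1)⟫
      + (starRingEnd ℂ) ⟪e 1, v⟫ * ⟪e 0, w⟫ * ⟪e 1, T (e 0)⟫
      + (starRingEnd ℂ) ⟪e 1, v⟫ * ⟪e 1, w⟫ * ⟪e 1, T (e 1)⟫ := by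
  conv_lhs => rw [← e.sum_repr' v, ← e.sum_repr' w]
  simp only [Fin.sum_univ_two, map_add, map_smul, inner_add_left, inner_add_right,
    inner_smul_left, inner_smul_right]
  ring

lemma parseval2 (e : OrthonormalBasis (Fin 2) ℂ H) (v : H) :
    ‖⟪e 0, v⟫‖ ^ 2 + ‖⟪e 1, v⟫‖ ^ 2 = ‖v‖ ^ 2 := by
  have h := e.sum_inner_mul_inner v v
  rw [Fin.sum_univ_two, ← inner_conj_symm v (e 0), ← inner_conj_symm v (e 1),
    Complex.conj_mul', Complex.conj_mul', inner_self_eq_norm_sq_to_K] at h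
  norm_cast at h
  exact Complex.ofReal_injective h

lemma trace_comp_distOp (ρ : H →ₗ[ℂ] H) (a' : ι' → H) (b : ι → H) (i : ι) :
    LinearMap.trace ℂ H (ρ ∘ₗ distOp a' b i)
      = ⟪b i, ρ (b i)⟫ - ∑ j, (‖⟪a' j, b i⟫‖ ^ 2 : ℂ) * ⟪a' j, ρ (a' j)⟫ := by
  unfold distOp
  rw [LinearMap.comp_sub, map_sub, trace_comp_ketbra]
  congr 1
  have hcomp : ρ ∘ₗ (∑ j : ι', (‖⟪a' j, b i⟫‖ ^ 2 : ℂ) • ketbra (a' j))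
      = ∑ j : ι', (‖⟪a' j, b i⟫‖ ^ 2 : ℂ) • (ρ ∘ₗ ketbra (a' j)) := by
    rw [show ∀ f g : H →ₗ[ℂ] H, f ∘ₗ g = f * g from fun _ _ => rfl, Finset.mul_sum]
    refine Finset.sum_congr rfl fun j _ => ?_
    rw [mul_smul_comm]
    rfl
  rw [hcomp, map_sum]
  refine Finset.sum_congr rfl fun j _ => ?_
  rw [map_smul, trace_comp_ketbra, smul_eq_mul]

lemma density_diag_real {ρ : H →ₗ[ℂ] H} (h : IsDensity ρ) (v : H) :
    ⟪v, ρ v⟫ = ((⟪v, ρ v⟫).re : ℂ) := by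
  have hc : (starRingEnd ℂ) ⟪v, ρ v⟫ = ⟪v, ρ v⟫ := by
    rw [inner_conj_symm, h.1 v v]
  exact (Complex.conj_eq_iff_re.mp hc).symm

lemma density_trace_two (a : OrthonormalBasis (Fin 2) ℂ H) {ρ : H →ₗ[ℂ] H} (h : IsDensity ρ) :
    (⟪a 0, ρ (a 0)⟫).re + (⟪a 1, ρ (a 1)⟫).re = 1 := by
  have ht := h.2.2
  rw [trace_onb a, Fin.sum_univ_two] at ht
  have := congrArg Complex.re ht
  simpa using this

lemma trace_comp_distOp_two (a b : OrthonormalBasis (Fin 2) ℂ H) (ρ : H →ₗ[ℂ] H) (i : Fin 2) :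
    LinearMap.trace ℂ H (ρ ∘ₗ distOp (⇑a) (⇑b) i)
      = (starRingEnd ℂ) ⟪a 0, b i⟫ * ⟪a 1, b i⟫ * ⟪a 0, ρ (a 1)⟫
        + (starRingEnd ℂ) ⟪a 1, b i⟫ * ⟪a 0, b i⟫ * ⟪a 1, ρ (a 0)⟫ := by
  rw [trace_comp_distOp, inner_map_expand a ρ (b i) (b i), Fin.sum_univ_two,
    show ((‖⟪a 0, b i⟫‖ : ℂ) ^ 2) = (starRingEnd ℂ) ⟪a 0, b i⟫ * ⟪a 0, b i⟫ from
      (Complex.conj_mul' _).symm,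
    show ((‖⟪a 1, b i⟫‖ : ℂ) ^ 2) = (starRingEnd ℂ) ⟪a 1, b i⟫ * ⟪a 1, b i⟫ from
      (Complex.conj_mul' _).symm]
  ring

lemma isDensity_ketbra {u : H} (hu : ‖u‖ = 1) : IsDensity (ketbra u) := by
  refine ⟨fun x y => ?_, fun x => ?_, ?_⟩
  · simp only [ketbra_apply, inner_smul_left, inner_smul_right]
    rw [mul_comm, inner_conj_symm]
  · have hxx : ⟪x, ketbra u x⟫ = ⟪u, x⟫ * ⟪x, u⟫ := by
      simp [ketbra_apply, inner_smul_right]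
    rw [hxx, ← inner_conj_symm x u, Complex.mul_conj]
    simpa using Complex.normSq_nonneg _
  · have h := trace_comp_ketbra (LinearMap.id (R := ℂ) (M := H)) u
    rw [LinearMap.id_comp] at h
    rw [h]
    simp [inner_self_eq_norm_sq_to_K, hu]

lemma density_offdiag {ρ : H →ₗ[ℂ] H} (h : IsDensity ρ) (x y : H) :
    ‖⟪x, ρ y⟫‖ ^ 2 ≤ (⟪x, ρ x⟫).re * (⟪y, ρ y⟫).re := by
  set m := ⟪x, ρ y⟫ with hm
  set p := (⟪x, ρ x⟫).re
  set q := (⟪y, ρ y⟫).re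
  have hp : 0 ≤ p := h.2.1 x
  have hq : 0 ≤ q := h.2.1 y
  by_cases hm0 : m = 0
  · rw [hm0]; simpa using mul_nonneg hp hq
  · have hmn : ‖m‖ ≠ 0 := norm_ne_zero_iff.mpr hm0
    set φ : ℂ := (starRingEnd ℂ) m / ‖m‖ with hφ
    have hφm : φ * m = (‖m‖ : ℂ) := by
      have hc : ((‖m‖ : ℝ) : ℂ) ≠ 0 := by exact_mod_cast hmn
      rw [hφ, div_mul_eq_mul_div, Complex.conj_mul', sq, mul_div_assoc, div_self hc, mul_one]
    have hφn : ‖φ‖ = 1 := by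
      rw [hφ, norm_div, RCLike.norm_conj, Complex.norm_real,
        Real.norm_of_nonneg (norm_nonneg m), div_self hmn]
    have hφφ : (starRingEnd ℂ) φ * φ = 1 := by
      rw [RCLike.conj_mul, hφn]; norm_num
    have hcm : (starRingEnd ℂ) φ * (starRingEnd ℂ) m = (‖m‖ : ℂ) := by
      rw [← map_mul, hφm, Complex.conj_ofReal]
    have key : ∀ t : ℝ, 0 ≤ q * (t * t) + (2 * ‖m‖) * t + p := by
      intro t
      have h0 := h.2.1 (x + ((t : ℂ) * φ) • y)
      have hsym : ⟪y, ρ x⟫ = (starRingEnd ℂ) m := by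
        rw [hm, ← inner_conj_symm, h.1]
      have expand : ⟪x + ((t:ℂ)*φ) • y, ρ (x + ((t:ℂ)*φ) • y)⟫
          = ⟪x, ρ x⟫ + ((2 * t * ‖m‖ : ℝ) : ℂ) + ((t * t : ℝ) : ℂ) * ⟪y, ρ y⟫ := by
        rw [map_add, map_smul, inner_add_left, inner_add_right, inner_add_right,
          inner_smul_left, inner_smul_right, inner_smul_left, inner_smul_right, ← hm, hsym,
          map_mul, Complex.conj_ofReal]
        push_cast
        linear_combination (t:ℂ) * hφm + (t:ℂ) * hcm + ((t:ℂ) * (t:ℂ) * ⟪y, ρ y⟫) * hφφ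
      rw [expand] at h0
      simp only [Complex.add_re, Complex.ofReal_re, Complex.re_ofReal_mul] at h0
      linarith
    have hd := discrim_le_zero key
    rw [discrim] at hd
    nlinarith [hd, norm_nonneg m]

lemma offdiag_le_half (a : OrthonormalBasis (Fin 2) ℂ H) {ρ : H →ₗ[ℂ] H} (h : IsDensity ρ) :
    ‖⟪a 0, ρ (a 1)⟫‖ ≤ 1 / 2 := by
  have h1 := density_offdiag h (a 0) (a 1)
  have h2 := density_trace_two a h
  have hp := h.2.1 (a 0)
  have hq := h.2.1 (a 1)
  nlinarith [norm_nonneg ⟪a 0, ρ (a 1)⟫,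
    sq_nonneg ((⟪a 0, ρ (a 0)⟫).re - (⟪a 1, ρ (a 1)⟫).re)]

lemma dist_bound (a b : OrthonormalBasis (Fin 2) ℂ H) {ρ : H →ₗ[ℂ] H} (h : IsDensity ρ)
    (i : Fin 2) :
    ‖LinearMap.trace ℂ H (ρ ∘ₗ distOp (⇑a) (⇑b) i)‖ ≤ ‖⟪a 0, b i⟫‖ * ‖⟪a 1, b i⟫‖ := by
  rw [trace_comp_distOp_two]
  have hr : ⟪a 1, ρ (a 0)⟫ = (starRingEnd ℂ) ⟪a 0, ρ (a 1)⟫ := by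
    rw [← inner_conj_symm, h.1]
  set z := (starRingEnd ℂ) ⟪a 0, b i⟫ * ⟪a 1, b i⟫ * ⟪a 0, ρ (a 1)⟫ with hz
  have hz' : (starRingEnd ℂ) ⟪a 1, b i⟫ * ⟪a 0, b i⟫ * ⟪a 1, ρ (a 0)⟫ = (starRingEnd ℂ) z := by
    rw [hr, hz, map_mul, map_mul, Complex.conj_conj]
    ring
  rw [hz', Complex.add_conj, Complex.norm_real]
  have hz2 : ‖z‖ = ‖⟪a 0, b i⟫‖ * ‖⟪a 1, b i⟫‖ * ‖⟪a 0, ρ (a 1)⟫‖ := by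
    rw [hz, norm_mul, norm_mul, RCLike.norm_conj]
  have habs : |2 * z.re| ≤ 2 * ‖z‖ := by
    rw [abs_mul, abs_two]
    have h1 : |z.re| ≤ ‖z‖ := Complex.abs_re_le_norm z
    linarith
  have hoff := offdiag_le_half a h
  calc |2 * z.re| ≤ 2 * ‖z‖ := habs
  _ = 2 * (‖⟪a 0, b i⟫‖ * ‖⟪a 1, b i⟫‖) * ‖⟪a 0, ρ (a 1)⟫‖ := by rw [hz2]; ring
  _ ≤ 2 * (‖⟪a 0, b i⟫‖ * ‖⟪a 1, b i⟫‖) * (1 / 2) := by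
      have hnn : (0:ℝ) ≤ 2 * (‖⟪a 0, b i⟫‖ * ‖⟪a 1, b i⟫‖) := by positivity
      exact mul_le_mul_of_nonneg_left hoff hnn
  _ = ‖⟪a 0, b i⟫‖ * ‖⟪a 1, b i⟫‖ := by ring

lemma diag_le_one (a : OrthonormalBasis (Fin 2) ℂ H) {ρ : H →ₗ[ℂ] H} (h : IsDensity ρ)
    {v : H} (hv : ‖v‖ = 1) : ‖⟪v, ρ v⟫‖ ≤ 1 := by
  have hexp := inner_map_expand a ρ v v
  set γ := ⟪a 0, v⟫ with hγ
  set δ := ⟪a 1, v⟫ with hδ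
  set p := (⟪a 0, ρ (a 0)⟫).re with hpd
  set q := (⟪a 1, ρ (a 1)⟫).re with hqd
  set r := ⟪a 0, ρ (a 1)⟫ with hrdef
  have hp := h.2.1 (a 0)
  have hq := h.2.1 (a 1)
  have hpq := density_trace_two a h
  have hgd : ‖γ‖ ^ 2 + ‖δ‖ ^ 2 = 1 := by
    have hpar := parseval2 a v
    rw [hv] at hpar
    simpa [hγ, hδ] using hpar
  have hR2 : ‖r‖ ^ 2 ≤ p * q := density_offdiag h (a 0) (a 1)
  have hr : ⟪a 1, ρ (a 0)⟫ = (starRingEnd ℂ) r := by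
    rw [hrdef, ← inner_conj_symm, h.1]
  have h00 : ⟪a 0, ρ (a 0)⟫ = (p : ℂ) := density_diag_real h _
  have h11 : ⟪a 1, ρ (a 1)⟫ = (q : ℂ) := density_diag_real h _
  rw [hexp, hr, h00, h11]
  have t1 : ‖(starRingEnd ℂ) γ * γ * (p : ℂ)‖ = ‖γ‖ ^ 2 * p := by
    rw [norm_mul, norm_mul, RCLike.norm_conj, Complex.norm_real,
      Real.norm_of_nonneg hp]
    ring
  have t4 : ‖(starRingEnd ℂ) δ * δ * (q : ℂ)‖ = ‖δ‖ ^ 2 * q := by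
    rw [norm_mul, norm_mul, RCLike.norm_conj, Complex.norm_real,
      Real.norm_of_nonneg hq]
    ring
  have t2 : ‖(starRingEnd ℂ) γ * δ * r‖ = ‖γ‖ * ‖δ‖ * ‖r‖ := by
    rw [norm_mul, norm_mul, RCLike.norm_conj]
  have t3 : ‖(starRingEnd ℂ) δ * γ * (starRingEnd ℂ) r‖ = ‖γ‖ * ‖δ‖ * ‖r‖ := by
    rw [norm_mul, norm_mul, RCLike.norm_conj, RCLike.norm_conj]
    ring
  have tri : ‖(starRingEnd ℂ) γ * γ * (p : ℂ) + (starRingEnd ℂ) γ * δ * r +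
      (starRingEnd ℂ) δ * γ * (starRingEnd ℂ) r + (starRingEnd ℂ) δ * δ * (q : ℂ)‖
      ≤ ‖γ‖ ^ 2 * p + ‖γ‖ * ‖δ‖ * ‖r‖ + ‖γ‖ * ‖δ‖ * ‖r‖ + ‖δ‖ ^ 2 * q := by
    have tri0 : ‖(starRingEnd ℂ) γ * γ * (p : ℂ) + (starRingEnd ℂ) γ * δ * r +
        (starRingEnd ℂ) δ * γ * (starRingEnd ℂ) r + (starRingEnd ℂ) δ * δ * (q : ℂ)‖
        ≤ ‖(starRingEnd ℂ) γ * γ * (p : ℂ)‖ + ‖(starRingEnd ℂ) γ * δ * r‖ +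
          ‖(starRingEnd ℂ) δ * γ * (starRingEnd ℂ) r‖ + ‖(starRingEnd ℂ) δ * δ * (q : ℂ)‖ :=
      le_trans (norm_add_le _ _) (by
        refine add_le_add (le_trans (norm_add_le _ _) ?_) le_rfl
        exact add_le_add (norm_add_le _ _) le_rfl)
    rw [t1, t2, t3, t4] at tri0
    exact tri0
  refine tri.trans ?_
  have key : 2 * (‖γ‖ * ‖δ‖ * ‖r‖) ≤ ‖γ‖ ^ 2 * q + ‖δ‖ ^ 2 * p := by
    have h1 : (2 * (‖γ‖ * ‖δ‖ * ‖r‖)) ^ 2 ≤ (‖γ‖ ^ 2 * q + ‖δ‖ ^ 2 * p) ^ 2 := by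
      nlinarith [mul_nonneg (sq_nonneg (‖γ‖ * ‖δ‖)) (sub_nonneg.mpr hR2),
        sq_nonneg (‖γ‖ ^ 2 * q - ‖δ‖ ^ 2 * p)]
    have h2 : (0:ℝ) ≤ ‖γ‖ ^ 2 * q + ‖δ‖ ^ 2 * p := by positivity
    exact le_of_pow_le_pow_left₀ two_ne_zero h2 h1
  nlinarith [key, hgd, hpq]

lemma sdError_le_two (a a' : OrthonormalBasis (Fin 2) ℂ H) {ρ : H →ₗ[ℂ] H} (h : IsDensity ρ) :
    sdError (⇑a) (⇑a') ρ ≤ 2 := by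
  refine ciSup_le fun i => ?_
  rw [LinearMap.comp_sub, map_sub, trace_comp_ketbra, trace_comp_ketbra]
  refine (norm_sub_le _ _).trans ?_
  have h1 := diag_le_one a h (a.orthonormal.1 i)
  have h2 := diag_le_one a h (a'.orthonormal.1 i)
  linarith

lemma le_sdDist {a' : ι' → H} {b : ι → H} {ρ : H →ₗ[ℂ] H} (i : ι) :
    ‖LinearMap.trace ℂ H (ρ ∘ₗ distOp a' b i)‖ ≤ sdDist a' b ρ := by
  have hd : sdDist a' b ρ = ⨆ i : ι, ‖LinearMap.trace ℂ H (ρ ∘ₗ distOp a' b i)‖ := rfl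
  rw [hd]
  exact le_ciSup
    (Set.finite_range fun j : ι => ‖LinearMap.trace ℂ H (ρ ∘ₗ distOp a' b j)‖).bddAbove i

lemma le_sdError {a a' : ι → H} {ρ : H →ₗ[ℂ] H} (i : ι) :
    ‖LinearMap.trace ℂ H (ρ ∘ₗ (ketbra (a i) - ketbra (a' i)))‖ ≤ sdError a a' ρ := by
  have hd : sdError a a' ρ
      = ⨆ i : ι, ‖LinearMap.trace ℂ H (ρ ∘ₗ (ketbra (a i) - ketbra (a' i)))‖ := rfl
  rw [hd]
  exact le_ciSup
    (Set.finite_range fun j : ι =>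
      ‖LinearMap.trace ℂ H (ρ ∘ₗ (ketbra (a j) - ketbra (a' j)))‖).bddAbove i

/-- Key construction: the optimal state for the lower bound. -/
lemma key_lower (a b a' : OrthonormalBasis (Fin 2) ℂ H)
    (hw : (starRingEnd ℂ) ⟪a 0, b 0⟫ * ⟪a 1, b 0⟫ ≠ 0) :
    ∃ ρ : H →ₗ[ℂ] H, IsDensity ρ ∧
      ‖LinearMap.trace ℂ H (ρ ∘ₗ distOp (⇑a) (⇑b) 0)‖ = ‖⟪a 0, b 0⟫‖ * ‖⟪a 1, b 0⟫‖ ∧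
      ‖LinearMap.trace ℂ H (ρ ∘ₗ distOp (⇑a) (⇑b) 0)
          - LinearMap.trace ℂ H (ρ ∘ₗ distOp (⇑a') (⇑b) 0)‖
        ≤ ‖LinearMap.trace ℂ H (ρ ∘ₗ (ketbra (a 0) - ketbra (a' 0)))‖ := by
  set α := ⟪a 0, b 0⟫ with hα
  set β := ⟪a 1, b 0⟫ with hβ
  set w := (starRingEnd ℂ) α * β with hwdef
  have hwn : ‖w‖ ≠ 0 := norm_ne_zero_iff.mpr hw
  have hwc : ((‖w‖ : ℝ) : ℂ) ≠ 0 := by exact_mod_cast hwn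
  set φ : ℂ := w / ‖w‖ with hφdef
  have hφn : ‖φ‖ = 1 := by
    rw [hφdef, norm_div, Complex.norm_real, Real.norm_of_nonneg (norm_nonneg w), div_self hwn]
  have hφφ : (starRingEnd ℂ) φ * φ = 1 := by rw [RCLike.conj_mul, hφn]; norm_num
  have hww : w * (starRingEnd ℂ) w = ((‖w‖ : ℂ)) ^ 2 := Complex.mul_conj' w
  have hwφ : w * (starRingEnd ℂ) φ = (‖w‖ : ℂ) := by
    rw [hφdef, map_div₀, Complex.conj_ofReal]
    calc w * ((starRingEnd ℂ) w / (‖w‖ : ℂ)) = w * (starRingEnd ℂ) w / (‖w‖ : ℂ) :=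
        (mul_div_assoc _ _ _).symm
    _ = ((‖w‖ : ℂ)) ^ 2 / (‖w‖ : ℂ) := by rw [Complex.mul_conj']
    _ = (‖w‖ : ℂ) := by rw [sq]; exact mul_div_cancel_left₀ _ hwc
  have hwφ' : (starRingEnd ℂ) w * φ = (‖w‖ : ℂ) := by
    rw [hφdef]
    calc (starRingEnd ℂ) w * (w / (‖w‖ : ℂ)) = (starRingEnd ℂ) w * w / (‖w‖ : ℂ) :=
        (mul_div_assoc _ _ _).symm
    _ = ((‖w‖ : ℂ)) ^ 2 / (‖w‖ : ℂ) := by rw [Complex.conj_mul']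
    _ = (‖w‖ : ℂ) := by rw [sq]; exact mul_div_cancel_left₀ _ hwc
  set t : ℝ := (Real.sqrt 2)⁻¹ with htdef
  have ht2 : t ^ 2 = 1 / 2 := by
    rw [htdef, ← Real.sqrt_inv, Real.sq_sqrt] <;> norm_num
  have htc : ((t : ℝ) : ℂ) ^ 2 = 1 / 2 := by
    rw [show ((t : ℝ) : ℂ) ^ 2 = ((t ^ 2 : ℝ) : ℂ) by push_cast; ring, ht2]
    norm_num
  have h00 : ⟪a 0, a 0⟫ = 1 := by
    simp [inner_self_eq_norm_sq_to_K, a.orthonormal.1 0]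
  have h11 : ⟪a 1, a 1⟫ = 1 := by
    simp [inner_self_eq_norm_sq_to_K, a.orthonormal.1 1]
  have h01 : ⟪a 0, a 1⟫ = 0 := a.orthonormal.2 (by decide)
  have h10 : ⟪a 1, a 0⟫ = 0 := a.orthonormal.2 (by decide)
  set u : H := (t : ℂ) • a 0 + ((t : ℂ) * φ) • a 1 with hudef
  have h0u : ⟪a 0, u⟫ = (t : ℂ) := by
    rw [hudef, inner_add_right, inner_smul_right, inner_smul_right, h00, h01, mul_one,
      mul_zero, add_zero]
  have h1u : ⟪a 1, u⟫ = (t : ℂ) * φ := by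
    rw [hudef, inner_add_right, inner_smul_right, inner_smul_right, h10, h11, mul_one,
      mul_zero, zero_add]
  have hu0 : ⟪u, a 0⟫ = (t : ℂ) := by
    rw [← inner_conj_symm, h0u, Complex.conj_ofReal]
  have hu1 : ⟪u, a 1⟫ = (t : ℂ) * (starRingEnd ℂ) φ := by
    rw [← inner_conj_symm, h1u, map_mul, Complex.conj_ofReal]
  have ht0 : 0 ≤ t := by rw [htdef]; positivity
  have hnu : ‖u‖ = 1 := by
    have hpar := parseval2 a u
    rw [h0u, h1u] at hpar
    rw [norm_mul, Complex.norm_real, Real.norm_of_nonneg ht0, hφn, mul_one] at hpar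
    have h2 : ‖u‖ ^ 2 = 1 := by rw [← hpar]; linarith [ht2]
    exact sq_eq' (norm_nonneg u) (by norm_num) (by rw [h2]; norm_num)
  refine ⟨ketbra u, isDensity_ketbra hnu, ?_, ?_⟩
  · -- the value at the optimal state
    have hr01 : ⟪a 0, ketbra u (a 1)⟫ = ((t : ℂ) * (starRingEnd ℂ) φ) * (t : ℂ) := by
      rw [ketbra_apply, inner_smul_right, hu1, h0u]
    have hr10 : ⟪a 1, ketbra u (a 0)⟫ = (t : ℂ) * ((t : ℂ) * φ) := by
      rw [ketbra_apply, inner_smul_right, hu0, h1u]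
    have hval : LinearMap.trace ℂ H (ketbra u ∘ₗ distOp (⇑a) (⇑b) 0) = ((‖w‖ : ℝ) : ℂ) := by
      rw [trace_comp_distOp_two a b (ketbra u) 0, hr01, hr10, ← hα, ← hβ]
      have hcw : (starRingEnd ℂ) β * α = (starRingEnd ℂ) w := by
        rw [hwdef, map_mul, Complex.conj_conj]; ring
      have hsq : ((t:ℂ)) ^ 2 = (t:ℂ) * (t:ℂ) := sq (t:ℂ) ▸ rfl
      linear_combination ((t:ℂ) * (t:ℂ)) * hwφ + ((t:ℂ) * (t:ℂ) * φ) * hcw + ((t:ℂ) * (t:ℂ)) * hwφ' + (2 * ((‖w‖:ℝ) : ℂ)) * htc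
    rw [hval, Complex.norm_real, Real.norm_of_nonneg (norm_nonneg w), hwdef, norm_mul,
      RCLike.norm_conj]
  · -- the error comparison
    set C := ‖⟪a' 0, b 0⟫‖ with hC
    set S := ‖⟪a' 1, b 0⟫‖ with hS
    set Q0 := ‖⟪u, a' 0⟫‖ with hQ0
    set Q1 := ‖⟪u, a' 1⟫‖ with hQ1
    have hb0 : ‖b 0‖ = 1 := b.orthonormal.1 0
    have hCS : C ^ 2 + S ^ 2 = 1 := by
      have := parseval2 a' (b 0); rwa [hb0, one_pow] at this
    have hQ : Q0 ^ 2 + Q1 ^ 2 = 1 := by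
      have := parseval2 a' u
      rw [hnu, one_pow, norm_inner_symm (a' 0) u, norm_inner_symm (a' 1) u] at this
      exact this
    have hcs : ‖α‖ ^ 2 + ‖β‖ ^ 2 = 1 := by
      have := parseval2 a (b 0); rwa [hb0, one_pow] at this
    have hn0 : ‖⟪u, a 0⟫‖ = t := by rw [hu0, Complex.norm_real, Real.norm_of_nonneg ht0]
    have hn1 : ‖⟪u, a 1⟫‖ = t := by
      rw [hu1, norm_mul, Complex.norm_real, Real.norm_of_nonneg ht0, RCLike.norm_conj, hφn,
        mul_one]
    have hXval : LinearMap.trace ℂ H (ketbra u ∘ₗ distOp (⇑a) (⇑b) 0)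
        - LinearMap.trace ℂ H (ketbra u ∘ₗ distOp (⇑a') (⇑b) 0)
        = ((C ^ 2 * Q0 ^ 2 + S ^ 2 * Q1 ^ 2 - 1 / 2 : ℝ) : ℂ) := by
      rw [trace_comp_distOp (ketbra u) (⇑a) (⇑b) 0, trace_comp_distOp (ketbra u) (⇑a') (⇑b) 0,
        Fin.sum_univ_two, Fin.sum_univ_two, ketbra_diag, ketbra_diag, ketbra_diag, ketbra_diag,
        ketbra_diag, hn0, hn1, ← hα, ← hβ, ← hC, ← hS, ← hQ0, ← hQ1]
      have hca : ((‖α‖ : ℂ)) ^ 2 + ((‖β‖ : ℂ)) ^ 2 = 1 := by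
        rw [show ((‖α‖ : ℂ)) ^ 2 + ((‖β‖ : ℂ)) ^ 2 = (((‖α‖ ^ 2 + ‖β‖ ^ 2 : ℝ)) : ℂ) by
          push_cast; ring, hcs]
        norm_num
      push_cast
      linear_combination (-((t:ℂ)^2)) * hca - htc
    have hDval : LinearMap.trace ℂ H (ketbra u ∘ₗ (ketbra (a 0) - ketbra (a' 0)))
        = ((1 / 2 - Q0 ^ 2 : ℝ) : ℂ) := by
      rw [LinearMap.comp_sub, map_sub, trace_comp_ketbra, trace_comp_ketbra,
        ketbra_diag, ketbra_diag, hn0, ← hQ0]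
      push_cast
      linear_combination htc
    rw [hXval, hDval, Complex.norm_real, Complex.norm_real, Real.norm_eq_abs, Real.norm_eq_abs]
    have hfac : C ^ 2 * Q0 ^ 2 + S ^ 2 * Q1 ^ 2 - 1 / 2
        = (2 * S ^ 2 - 1) * (1 / 2 - Q0 ^ 2) := by
      linear_combination Q0 ^ 2 * hCS + S ^ 2 * hQ
    rw [hfac, abs_mul]
    have hS1 : |2 * S ^ 2 - 1| ≤ 1 := by
      rw [abs_le]
      constructor <;> nlinarith [sq_nonneg S, sq_nonneg C]
    nlinarith [abs_nonneg (1 / 2 - Q0 ^ 2), abs_nonneg (2 * S ^ 2 - 1)]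

/-- qubit error-disturbance trade-off `ε(𝒜,𝒜') + η(𝒜',ℬ) ≥ η(𝒜,ℬ)`,
where `η(𝒜,ℬ) = |⟨a₁,b₁⟩|·√(1-|⟨a₁,b₁⟩|²)`. -/
theorem qubit_error_disturbance_tradeoff (a b : OrthonormalBasis (Fin 2) ℂ H)
    (a' : OrthonormalBasis (Fin 2) ℂ H) :
    siDist (⇑a) (⇑b) ≤ siError (⇑a) (⇑a') + siDist (⇑a') (⇑b) ∧
    siDist (⇑a) (⇑b) = ‖⟪a 0, b 0⟫‖ * Real.sqrt (1 - ‖⟪a 0, b 0⟫‖ ^ 2) := by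
  haveI hne : Nonempty {ρ : H →ₗ[ℂ] H // IsDensity ρ} :=
    ⟨⟨ketbra (b 0), isDensity_ketbra (b.orthonormal.1 0)⟩⟩
  have hb0 : ‖b 0‖ = 1 := b.orthonormal.1 0
  have hcs2 : ‖⟪a 0, b 0⟫‖ ^ 2 + ‖⟪a 1, b 0⟫‖ ^ 2 = 1 := by
    have := parseval2 a (b 0); rwa [hb0, one_pow] at this
  have hsqrt : Real.sqrt (1 - ‖⟪a 0, b 0⟫‖ ^ 2) = ‖⟪a 1, b 0⟫‖ := by
    rw [show 1 - ‖⟪a 0, b 0⟫‖ ^ 2 = ‖⟪a 1, b 0⟫‖ ^ 2 by linarith,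
      Real.sqrt_sq (norm_nonneg _)]
  have e1 : ‖⟪a 0, b 1⟫‖ = ‖⟪a 1, b 0⟫‖ := by
    have h1 := parseval2 b (a 0)
    rw [a.orthonormal.1 0, one_pow, norm_inner_symm (b 0) (a 0),
      norm_inner_symm (b 1) (a 0)] at h1
    exact sq_eq' (norm_nonneg _) (norm_nonneg _) (by linarith)
  have e2 : ‖⟪a 1, b 1⟫‖ = ‖⟪a 0, b 0⟫‖ := by
    have h1 := parseval2 b (a 1)
    rw [a.orthonormal.1 1, one_pow, norm_inner_symm (b 0) (a 1),
      norm_inner_symm (b 1) (a 1)] at h1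
    exact sq_eq' (norm_nonneg _) (norm_nonneg _) (by linarith)
  -- upper bound for sdDist a b
  have hUB : ∀ ρ : {ρ : H →ₗ[ℂ] H // IsDensity ρ},
      sdDist (⇑a) (⇑b) ρ.1 ≤ ‖⟪a 0, b 0⟫‖ * ‖⟪a 1, b 0⟫‖ := by
    rintro ⟨ρ, hρ⟩
    refine ciSup_le fun i => ?_
    fin_cases i
    · exact dist_bound a b hρ 0
    · refine (dist_bound a b hρ 1).trans ?_
      rw [e1, e2]
      exact le_of_eq (mul_comm _ _)
  have hraUB : BddAbove (Set.range fun ρ : {ρ : H →ₗ[ℂ] H // IsDensity ρ} =>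
      sdDist (⇑a) (⇑b) ρ.1) := by
    refine ⟨‖⟪a 0, b 0⟫‖ * ‖⟪a 1, b 0⟫‖, ?_⟩
    rintro x ⟨ρ, rfl⟩
    exact hUB ρ
  have hsiUB : siDist (⇑a) (⇑b) ≤ ‖⟪a 0, b 0⟫‖ * ‖⟪a 1, b 0⟫‖ := ciSup_le hUB
  -- bounds for the other sups
  have hUBa' : ∀ ρ : {ρ : H →ₗ[ℂ] H // IsDensity ρ}, sdDist (⇑a') (⇑b) ρ.1 ≤ 1 := by
    rintro ⟨ρ, hρ⟩
    refine ciSup_le fun i => ?_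
    refine (dist_bound a' b hρ i).trans ?_
    have k1 : ‖⟪a' 0, b i⟫‖ ≤ 1 := by
      have := norm_inner_le_norm (𝕜 := ℂ) (a' 0) (b i)
      rwa [a'.orthonormal.1 0, b.orthonormal.1 i, one_mul] at this
    have k2 : ‖⟪a' 1, b i⟫‖ ≤ 1 := by
      have := norm_inner_le_norm (𝕜 := ℂ) (a' 1) (b i)
      rwa [a'.orthonormal.1 1, b.orthonormal.1 i, one_mul] at this
    nlinarith [norm_nonneg ⟪a' 0, b i⟫, norm_nonneg ⟪a' 1, b i⟫]
  have hraA' : BddAbove (Set.range fun ρ : {ρ : H →ₗ[ℂ] H // IsDensity ρ} =>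
      sdDist (⇑a') (⇑b) ρ.1) := by
    refine ⟨1, ?_⟩
    rintro x ⟨ρ, rfl⟩
    exact hUBa' ρ
  have hraE : BddAbove (Set.range fun ρ : {ρ : H →ₗ[ℂ] H // IsDensity ρ} =>
      sdError (⇑a) (⇑a') ρ.1) := by
    refine ⟨2, ?_⟩
    rintro x ⟨ρ, rfl⟩
    exact sdError_le_two a a' ρ.2
  have hDistNonneg : ∀ (e f : OrthonormalBasis (Fin 2) ℂ H)
      (ρ : {ρ : H →ₗ[ℂ] H // IsDensity ρ}), (0:ℝ) ≤ sdDist (⇑e) (⇑f) ρ.1 :=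
    fun e f ρ => le_trans (norm_nonneg _) (le_sdDist 0)
  have hErrNonneg : ∀ ρ : {ρ : H →ₗ[ℂ] H // IsDensity ρ}, (0:ℝ) ≤ sdError (⇑a) (⇑a') ρ.1 :=
    fun ρ => le_trans (norm_nonneg _) (le_sdError 0)
  -- lower bound
  have hLB : ‖⟪a 0, b 0⟫‖ * ‖⟪a 1, b 0⟫‖ ≤ siDist (⇑a) (⇑b) := by
    by_cases hw : (starRingEnd ℂ) ⟪a 0, b 0⟫ * ⟪a 1, b 0⟫ = 0
    · have hcs0 : ‖⟪a 0, b 0⟫‖ * ‖⟪a 1, b 0⟫‖ = 0 := by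
        have hnz := congrArg norm hw
        rwa [norm_mul, RCLike.norm_conj, norm_zero] at hnz
      rw [hcs0]
      obtain ρ0 := hne.some
      exact le_trans (hDistNonneg a b ρ0) (le_ciSup hraUB ρ0)
    · obtain ⟨ρ, hρ, hval, _⟩ := key_lower a b a' hw
      have h1 : ‖⟪a 0, b 0⟫‖ * ‖⟪a 1, b 0⟫‖ ≤ sdDist (⇑a) (⇑b) ρ := by
        rw [← hval]
        exact le_sdDist 0
      exact h1.trans (le_ciSup hraUB (⟨ρ, hρ⟩ : {ρ : H →ₗ[ℂ] H // IsDensity ρ}))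
  have hEq : siDist (⇑a) (⇑b) = ‖⟪a 0, b 0⟫‖ * ‖⟪a 1, b 0⟫‖ := le_antisymm hsiUB hLB
  constructor
  · by_cases hw : (starRingEnd ℂ) ⟪a 0, b 0⟫ * ⟪a 1, b 0⟫ = 0
    · have hcs0 : ‖⟪a 0, b 0⟫‖ * ‖⟪a 1, b 0⟫‖ = 0 := by
        have hnz := congrArg norm hw
        rwa [norm_mul, RCLike.norm_conj, norm_zero] at hnz
      rw [hEq, hcs0]
      obtain ρ0 := hne.some
      have g1 : (0:ℝ) ≤ siError (⇑a) (⇑a') := le_trans (hErrNonneg ρ0) (le_ciSup hraE ρ0)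
      have g2 : (0:ℝ) ≤ siDist (⇑a') (⇑b) := le_trans (hDistNonneg a' b ρ0) (le_ciSup hraA' ρ0)
      linarith
    · obtain ⟨ρ, hρ, hval, hineq⟩ := key_lower a b a' hw
      have step1 : ‖⟪a 0, b 0⟫‖ * ‖⟪a 1, b 0⟫‖
          ≤ ‖LinearMap.trace ℂ H (ρ ∘ₗ distOp (⇑a') (⇑b) 0)‖
          + ‖LinearMap.trace ℂ H (ρ ∘ₗ distOp (⇑a) (⇑b) 0)
              - LinearMap.trace ℂ H (ρ ∘ₗ distOp (⇑a') (⇑b) 0)‖ := by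
        rw [← hval]
        have hdec : LinearMap.trace ℂ H (ρ ∘ₗ distOp (⇑a) (⇑b) 0)
            = LinearMap.trace ℂ H (ρ ∘ₗ distOp (⇑a') (⇑b) 0)
              + (LinearMap.trace ℂ H (ρ ∘ₗ distOp (⇑a) (⇑b) 0)
                - LinearMap.trace ℂ H (ρ ∘ₗ distOp (⇑a') (⇑b) 0)) := by ring
        calc ‖LinearMap.trace ℂ H (ρ ∘ₗ distOp (⇑a) (⇑b) 0)‖
            = ‖LinearMap.trace ℂ H (ρ ∘ₗ distOp (⇑a') (⇑b) 0)
              + (LinearMap.trace ℂ H (ρ ∘ₗ distOp (⇑a) (⇑b) 0)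
                - LinearMap.trace ℂ H (ρ ∘ₗ distOp (⇑a') (⇑b) 0))‖ := by rw [← hdec]
        _ ≤ _ := norm_add_le _ _
      have step2 : ‖⟪a 0, b 0⟫‖ * ‖⟪a 1, b 0⟫‖ ≤ sdDist (⇑a') (⇑b) ρ + sdError (⇑a) (⇑a') ρ :=
        step1.trans (add_le_add (le_sdDist 0) (hineq.trans (le_sdError 0)))
      have step3 : sdDist (⇑a') (⇑b) ρ ≤ siDist (⇑a') (⇑b) :=
        le_ciSup hraA' (⟨ρ, hρ⟩ : {ρ : H →ₗ[ℂ] H // IsDensity ρ})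
      have step4 : sdError (⇑a) (⇑a') ρ ≤ siError (⇑a) (⇑a') :=
        le_ciSup hraE (⟨ρ, hρ⟩ : {ρ : H →ₗ[ℂ] H // IsDensity ρ})
      rw [hEq]
      linarith
  · rw [hEq, hsqrt]
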